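/- arXiv:1201.5168 — 2 statements merged into one kernel-verified Lean document; each statement's English description precedes it below -/
import Mathlib

section
/- For every real k > 0 there is a constant β_k > 0 such that: if T1 and T2 are (unrooted) binary phylogenetic trees on the same leaf-set of cardinality n, each of radius at most k·log n, then mast{T1, T2} ≥ n^{β_k}. -/
/-!
# Rooted binary phylogenetic trees

`RTree L` is the type of rooted binary trees with leaves labelled by elements of `L`:
every internal vertex has exactly two children (a left child and a right child), and
a tree with one leaf is a single vertex.
-/

inductive RTree (L : Type) : Type
  | leaf : L → RTree L
  | node : RTree L → RTree L → RTree L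

namespace RTree

variable {L : Type}

/-- The list of leaf labels of a rooted binary tree, read from left to right. -/
def leafList : RTree L → List L
  | leaf b => [b]
  | node l r => leafList l ++ leafList r

/-- The number of leaves of a rooted binary tree. -/
def numLeaves (T : RTree L) : ℕ := T.leafList.length

/-- The set of leaf labels of a rooted binary tree. -/
def leafSet (T : RTree L) : Set L := {b | b ∈ T.leafList}

/-- The height of a rooted binary tree: the maximum distance from the root to a leaf. -/
def height : RTree L → ℕ
  | leaf _ => 0
  | node l r => max (height l) (height r) + 1

/-- A rooted binary tree is balanced if all of its leaves are at the same distance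
from the root. -/
def IsBalanced : RTree L → Prop
  | leaf _ => True
  | node l r => IsBalanced l ∧ IsBalanced r ∧ height l = height r

/-- A rooted binary tree is phylogenetic if its leaves are labelled bijectively by a
finite set, i.e. all leaf labels are distinct. -/
def IsPhylo (T : RTree L) : Prop := T.leafList.Nodup

/-- `Embeds S T` is the subtree relation `S ⪯ T`: there is an injective map `f` from the
vertices of `S` to the vertices of `T` such that `f x = x` for every leaf `x` of `S`
(leaves being identified across trees by their labels) and
`f (x ∧ y) = f x ∧ f y` for all vertices `x`, `y` of `S`, where `∧` denotes the most
recent common ancestor.  Equivalently (for trees with distinct leaf labels), `S` is the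
restriction of `T` to the leaf set of `S`, up to rooted isomorphism; this structural
characterization is taken as the definition. -/
inductive Embeds : RTree L → RTree L → Prop
  | leaf (b : L) : Embeds (RTree.leaf b) (RTree.leaf b)
  | left {S l r : RTree L} : Embeds S l → Embeds S (RTree.node l r)
  | right {S l r : RTree L} : Embeds S r → Embeds S (RTree.node l r)
  | pair {s₁ s₂ l r : RTree L} :
      Embeds s₁ l → Embeds s₂ r → Embeds (RTree.node s₁ s₂) (RTree.node l r)
  | pair_swap {s₁ s₂ l r : RTree L} :
      Embeds s₁ r → Embeds s₂ l → Embeds (RTree.node s₁ s₂) (RTree.node l r)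

/-- `mast T₁ T₂` is the maximum cardinality of a subset `X ⊆ L(T₁) ∩ L(T₂)` such that
the restrictions `T₁|X` and `T₂|X` are isomorphic; equivalently, the maximum number of
leaves of a rooted binary phylogenetic tree `S` with `S ⪯ T₁` and `S ⪯ T₂`. -/
noncomputable def mast (T₁ T₂ : RTree L) : ℕ :=
  sSup {n | ∃ S : RTree L, S.IsPhylo ∧ Embeds S T₁ ∧ Embeds S T₂ ∧ S.numLeaves = n}

end RTree

/-!
# Unrooted binary phylogenetic trees, via rooted representatives

An unrooted binary phylogenetic tree (all internal vertices of degree 3) with at least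
two leaves is represented by any rooted binary tree obtained from it by subdividing an
edge and rooting there; conversely, suppressing the (degree-2) root of a rooted binary
tree yields an unrooted one.  Two rooted trees represent the same unrooted tree (i.e.
the unrooted trees are isomorphic by a graph isomorphism fixing every leaf label) iff
they are related by the equivalence relation `URel` generated by moving the root across
an edge together with (unordered) rooted isomorphism.
-/

namespace RTree

variable {L : Type}

/-- Rooted isomorphism of rooted binary trees, fixing all leaf labels (the two children
of a vertex are unordered). -/
inductive RIso : RTree L → RTree L → Prop
  | leaf (b : L) : RIso (RTree.leaf b) (RTree.leaf b)
  | pair {a b c d : RTree L} :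
      RIso a c → RIso b d → RIso (RTree.node a b) (RTree.node c d)
  | pair_swap {a b c d : RTree L} :
      RIso a d → RIso b c → RIso (RTree.node a b) (RTree.node c d)

/-- Moving the root of a rooted binary tree across one edge of the underlying unrooted
tree: this does not change the unrooted tree obtained by suppressing the root. -/
inductive RootMove : RTree L → RTree L → Prop
  | assoc (a b c : RTree L) :
      RootMove (RTree.node a (RTree.node b c)) (RTree.node (RTree.node a b) c)

/-- `URel S T` holds iff the unrooted binary trees obtained from `S` and `T` by
suppressing their roots are isomorphic by a graph isomorphism fixing every leaf label. -/
def URel (S T : RTree L) : Prop :=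
  Relation.EqvGen (fun X Y => RootMove X Y ∨ RIso X Y) S T

/-- `umast T₁ T₂` is the maximum agreement subtree size of the *unrooted* binary
phylogenetic trees represented by `T₁` and `T₂`: the maximum cardinality of a set
`X ⊆ L(T₁) ∩ L(T₂)` such that the unrooted restrictions `T₁|X` and `T₂|X` are
isomorphic (fixing leaf labels).  Equivalently, the maximum number of leaves of a
common unrooted subtree, given here by a pair of rooted representatives. -/
noncomputable def umast (T₁ T₂ : RTree L) : ℕ :=
  sSup {n | ∃ S₁ S₂ : RTree L, S₁.IsPhylo ∧ S₂.IsPhylo ∧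
    Embeds S₁ T₁ ∧ Embeds S₂ T₂ ∧ URel S₁ S₂ ∧ S₁.numLeaves = n}

end RTree

namespace RTree

variable {L : Type}

/-- The maximum length (number of edges) of a path in a rooted binary tree (the root
counting as a genuine degree-2 vertex). -/
def rdiam : RTree L → ℕ
  | RTree.leaf _ => 0
  | RTree.node l r => max (max (rdiam l) (rdiam r)) (l.height + r.height + 2)

/-- The diameter of the unrooted tree obtained by suppressing the root: the longest
path through the (suppressed) root loses one edge. -/
def udiam : RTree L → ℕ
  | RTree.leaf _ => 0
  | RTree.node l r => max (max (rdiam l) (rdiam r)) (l.height + r.height + 1)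

/-- The radius of the unrooted tree represented by a rooted binary tree: the minimum
over vertices `u` of the maximum distance from `u` to any other vertex.  For a tree
this equals `⌈diameter / 2⌉`. -/
def uradius (T : RTree L) : ℕ := (udiam T + 1) / 2

end RTree

section Aux

namespace RTree

variable {L : Type}

/-- size for induction -/
def tsize : RTree L → ℕ
  | leaf _ => 1
  | node l r => tsize l + tsize r + 1

/-- common leaf count -/
def cc [DecidableEq L] (T₁ T₂ : RTree L) : ℕ :=
  (T₁.leafList.toFinset ∩ T₂.leafList.toFinset).card

lemma leafList_ne_nil (T : RTree L) : T.leafList ≠ [] := by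
  induction T with
  | leaf b => simp [leafList]
  | node l r ihl ihr => simp [leafList, ihl]

lemma mem_leafList_of_embeds {S T : RTree L} (h : Embeds S T) :
    ∀ x ∈ S.leafList, x ∈ T.leafList := by
  induction h with
  | leaf b => intro x hx; exact hx
  | left _ ih => intro x hx; simp only [leafList, List.mem_append]; exact Or.inl (ih x hx)
  | right _ ih => intro x hx; simp only [leafList, List.mem_append]; exact Or.inr (ih x hx)
  | pair _ _ ih₁ ih₂ =>
      intro x hx
      simp only [leafList, List.mem_append] at hx ⊢
      exact hx.imp (ih₁ x) (ih₂ x)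
  | pair_swap _ _ ih₁ ih₂ =>
      intro x hx
      simp only [leafList, List.mem_append] at hx ⊢
      exact hx.symm.imp (ih₂ x) (ih₁ x)

lemma embeds_leaf_of_mem {T : RTree L} {x : L} (hx : x ∈ T.leafList) :
    Embeds (RTree.leaf x) T := by
  induction T with
  | leaf b => simp only [leafList, List.mem_singleton] at hx; subst hx; exact Embeds.leaf x
  | node l r ihl ihr =>
      simp only [leafList, List.mem_append] at hx
      rcases hx with h | h
      · exact Embeds.left (ihl h)
      · exact Embeds.right (ihr h)

lemma numLeaves_le_of_embeds {S T : RTree L} (hS : S.IsPhylo) (h : Embeds S T) :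
    S.numLeaves ≤ T.numLeaves := by
  classical
  have h1 : S.leafList.toFinset.card = S.numLeaves := List.toFinset_card_of_nodup hS
  have h2 : S.leafList.toFinset ⊆ T.leafList.toFinset := by
    intro x hx
    rw [List.mem_toFinset] at hx ⊢
    exact mem_leafList_of_embeds h x hx
  calc S.numLeaves = S.leafList.toFinset.card := h1.symm
    _ ≤ T.leafList.toFinset.card := Finset.card_le_card h2
    _ ≤ T.leafList.length := T.leafList.toFinset_card_le

lemma isPhylo_node {A B : RTree L} (h : (RTree.node A B).IsPhylo) :
    A.IsPhylo ∧ B.IsPhylo ∧ A.leafList.Disjoint B.leafList := by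
  have := h
  rw [IsPhylo, leafList, List.nodup_append] at this
  exact ⟨this.1, this.2.1, fun a ha hb => this.2.2 a ha a hb rfl⟩

section cc
variable [DecidableEq L]

lemma cc_le_left {T₁ T₂ : RTree L} (h : T₁.IsPhylo) : cc T₁ T₂ ≤ T₁.numLeaves := by
  calc cc T₁ T₂ ≤ T₁.leafList.toFinset.card := Finset.card_le_card Finset.inter_subset_left
    _ = T₁.numLeaves := List.toFinset_card_of_nodup h

lemma cc_leaf_left {x : L} {T : RTree L} : cc (RTree.leaf x) T ≤ 1 := by
  calc cc (RTree.leaf x) T ≤ ((RTree.leaf x) : RTree L).leafList.toFinset.card :=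
      Finset.card_le_card Finset.inter_subset_left
    _ = 1 := by simp [leafList]

lemma mem_of_cc_leaf_left {x : L} {T : RTree L} (h : 1 ≤ cc (RTree.leaf x) T) :
    x ∈ T.leafList := by
  rw [cc] at h
  obtain ⟨y, hy⟩ := Finset.card_pos.mp h
  simp only [Finset.mem_inter, List.mem_toFinset] at hy
  have : y = x := by simpa [leafList] using hy.1
  subst this; exact hy.2

lemma mem_of_cc_leaf_right {x : L} {T : RTree L} (h : 1 ≤ cc T (RTree.leaf x)) :
    x ∈ T.leafList := by
  rw [cc] at h
  obtain ⟨y, hy⟩ := Finset.card_pos.mp h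
  simp only [Finset.mem_inter, List.mem_toFinset] at hy
  have : y = x := by simpa [leafList] using hy.2
  subst this; exact hy.1

lemma cc_leaf_right {x : L} {T : RTree L} : cc T (RTree.leaf x) ≤ 1 := by
  calc cc T (RTree.leaf x) ≤ ((RTree.leaf x) : RTree L).leafList.toFinset.card :=
      Finset.card_le_card Finset.inter_subset_right
    _ = 1 := by simp [leafList]

lemma cc_node_left {A B T : RTree L} (h : (RTree.node A B).IsPhylo) :
    cc (RTree.node A B) T = cc A T + cc B T := by
  obtain ⟨hA, hB, hd⟩ := isPhylo_node h
  have hdisj : Disjoint (A.leafList.toFinset ∩ T.leafList.toFinset)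
      (B.leafList.toFinset ∩ T.leafList.toFinset) := by
    apply Finset.disjoint_left.mpr
    intro x hx hx'
    simp only [Finset.mem_inter, List.mem_toFinset] at hx hx'
    exact hd hx.1 hx'.1
  rw [cc, cc, cc]
  have : (RTree.node A B).leafList.toFinset = A.leafList.toFinset ∪ B.leafList.toFinset := by
    simp [leafList]
  rw [this, Finset.union_inter_distrib_right, Finset.card_union_of_disjoint hdisj]

lemma cc_node_right {A B T : RTree L} (h : (RTree.node A B).IsPhylo) :
    cc T (RTree.node A B) = cc T A + cc T B := by
  obtain ⟨hA, hB, hd⟩ := isPhylo_node h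
  have hdisj : Disjoint (T.leafList.toFinset ∩ A.leafList.toFinset)
      (T.leafList.toFinset ∩ B.leafList.toFinset) := by
    apply Finset.disjoint_left.mpr
    intro x hx hx'
    simp only [Finset.mem_inter, List.mem_toFinset] at hx hx'
    exact hd hx.2 hx'.2
  rw [cc, cc, cc]
  have : (RTree.node A B).leafList.toFinset = A.leafList.toFinset ∪ B.leafList.toFinset := by
    simp [leafList]
  rw [this, Finset.inter_union_distrib_left, Finset.card_union_of_disjoint hdisj]

end cc

section arith
variable {lam mu beta : ℝ}

lemma theta_pos (hl0 : 0 < lam) : 0 < lam ^ beta := Real.rpow_pos_of_pos hl0 _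

lemma theta_le_one (hl0 : 0 < lam) (hl1 : lam < 1) (hb0 : 0 < beta) : lam ^ beta ≤ 1 :=
  Real.rpow_le_one hl0.le hl1.le hb0.le

lemma arith_descend (hl0 : 0 < lam) (hl1 : lam < 1) (hb0 : 0 < beta)
    {n p : ℝ} (hn : 0 ≤ n) (hlam_n : 0 ≤ lam * n) (hp : lam * n ≤ p) {m m' : ℕ}
    (hm : m + 1 ≤ m') :
    n ^ beta * (lam ^ beta) ^ m' ≤ p ^ beta * (lam ^ beta) ^ m := by
  set θ := lam ^ beta with hθ
  have hθ0 : 0 < θ := theta_pos hl0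
  have hθ1 : θ ≤ 1 := theta_le_one hl0 hl1 hb0
  have h1 : θ ^ m' ≤ θ ^ (m + 1) := pow_le_pow_of_le_one hθ0.le hθ1 hm
  have h2 : n ^ beta * θ ^ m' ≤ n ^ beta * θ ^ (m + 1) := by
    apply mul_le_mul_of_nonneg_left h1 (Real.rpow_nonneg hn beta)
  have h3 : n ^ beta * θ ^ (m + 1) = (lam * n) ^ beta * θ ^ m := by
    rw [pow_succ, Real.mul_rpow hl0.le hn]
    ring
  have h4 : (lam * n) ^ beta ≤ p ^ beta := Real.rpow_le_rpow hlam_n hp hb0.le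
  calc n ^ beta * θ ^ m' ≤ n ^ beta * θ ^ (m + 1) := h2
    _ = (lam * n) ^ beta * θ ^ m := h3
    _ ≤ p ^ beta * θ ^ m := by
        apply mul_le_mul_of_nonneg_right h4 (pow_nonneg hθ0.le m)

lemma arith_pair (hl0 : 0 < lam) (hl1 : lam < 1) (hb0 : 0 < beta)
    (hmu0 : 0 ≤ mu) (hbm : (mu / 2) ^ beta = (1 / 2 : ℝ))
    {n a d : ℝ} (hn : 0 ≤ n) (ha : mu * n / 2 ≤ a) (hd : mu * n / 2 ≤ d)
    {m m₁ m₂ : ℕ} (h₁ : m₁ ≤ m) (h₂ : m₂ ≤ m) :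
    n ^ beta * (lam ^ beta) ^ m ≤ a ^ beta * (lam ^ beta) ^ m₁ + d ^ beta * (lam ^ beta) ^ m₂ := by
  set θ := lam ^ beta with hθ
  have hθ0 : 0 < θ := theta_pos hl0
  have hθ1 : θ ≤ 1 := theta_le_one hl0 hl1 hb0
  have key : ∀ (x : ℝ) (mx : ℕ), mu * n / 2 ≤ x → mx ≤ m →
      (1 / 2 : ℝ) * (n ^ beta * θ ^ m) ≤ x ^ beta * θ ^ mx := by
    intro x mx hx hmx
    have hx0 : (0:ℝ) ≤ mu * n / 2 := by positivity
    have h1 : (mu * n / 2) ^ beta ≤ x ^ beta := Real.rpow_le_rpow hx0 hx hb0.le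
    have h2 : (mu * n / 2) ^ beta = (1 / 2 : ℝ) * n ^ beta := by
      have : mu * n / 2 = (mu / 2) * n := by ring
      rw [this, Real.mul_rpow (by positivity) hn, hbm]
    have h3 : θ ^ m ≤ θ ^ mx := pow_le_pow_of_le_one hθ0.le hθ1 hmx
    calc (1 / 2 : ℝ) * (n ^ beta * θ ^ m) = ((1 / 2) * n ^ beta) * θ ^ m := by ring
      _ = (mu * n / 2) ^ beta * θ ^ m := by rw [h2]
      _ ≤ x ^ beta * θ ^ m := mul_le_mul_of_nonneg_right h1 (pow_nonneg hθ0.le m)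
      _ ≤ x ^ beta * θ ^ mx := mul_le_mul_of_nonneg_left h3 (Real.rpow_nonneg (hx0.trans hx) beta)
  have k1 := key a m₁ ha h₁
  have k2 := key d m₂ hd h₂
  linarith

end arith

lemma numLeaves_node (A B : RTree L) :
    (RTree.node A B).numLeaves = A.numLeaves + B.numLeaves := by
  simp [numLeaves, leafList]

lemma phylo_node_of {A B S₁ S₂ : RTree L} (h : (RTree.node A B).IsPhylo)
    (h₁ : S₁.IsPhylo) (h₂ : S₂.IsPhylo) (e₁ : Embeds S₁ A) (e₂ : Embeds S₂ B) :
    (RTree.node S₁ S₂).IsPhylo := by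
  rw [IsPhylo, leafList, List.nodup_append]
  exact ⟨h₁, h₂, fun x hx y hy hxy => (isPhylo_node h).2.2
    (mem_leafList_of_embeds e₁ x hx) (mem_leafList_of_embeds e₂ x (by rw [hxy]; exact hy))⟩

lemma tsize_pos (T : RTree L) : 1 ≤ tsize T := by
  cases T <;> simp [tsize]

lemma exists_agreement [DecidableEq L] {lam mu beta : ℝ}
    (hl0 : 0 < lam) (hl1 : lam < 1) (hmu : mu = 1 - lam)
    (hb0 : 0 < beta) (hbm : (mu / 2) ^ beta = (1 / 2 : ℝ)) :
    ∀ N : ℕ, ∀ T₁ T₂ : RTree L, tsize T₁ + tsize T₂ ≤ N →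
      T₁.IsPhylo → T₂.IsPhylo → 1 ≤ cc T₁ T₂ →
      ∃ S : RTree L, S.IsPhylo ∧ Embeds S T₁ ∧ Embeds S T₂ ∧
        (cc T₁ T₂ : ℝ) ^ beta * (lam ^ beta) ^ (T₁.height + T₂.height) ≤ (S.numLeaves : ℝ) := by
  have hmu0 : 0 < mu := by rw [hmu]; linarith
  intro N
  induction N with
  | zero =>
      intro T₁ T₂ hsize
      have := tsize_pos T₁; have := tsize_pos T₂; omega
  | succ N ih =>
      intro T₁ T₂ hsize hP1 hP2 hcc
      have hθ0 : (0:ℝ) < lam ^ beta := theta_pos hl0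
      have hθ1 : lam ^ beta ≤ 1 := theta_le_one hl0 hl1 hb0
      cases T₁ with
      | leaf x =>
          have hcc1 : cc (RTree.leaf x) T₂ = 1 := le_antisymm cc_leaf_left hcc
          refine ⟨RTree.leaf x, by simp [IsPhylo, leafList], Embeds.leaf x,
            embeds_leaf_of_mem (mem_of_cc_leaf_left hcc), ?_⟩
          rw [hcc1]
          simp only [Nat.cast_one, Real.one_rpow, one_mul, numLeaves, leafList,
            List.length_singleton]
          exact pow_le_one₀ hθ0.le hθ1
      | node A B =>
        cases T₂ with
        | leaf y =>
            have hcc1 : cc (RTree.node A B) (RTree.leaf y) = 1 := le_antisymm cc_leaf_right hcc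
            refine ⟨RTree.leaf y, by simp [IsPhylo, leafList],
              embeds_leaf_of_mem (mem_of_cc_leaf_right hcc), Embeds.leaf y, ?_⟩
            rw [hcc1]
            simp only [Nat.cast_one, Real.one_rpow, one_mul, numLeaves, leafList,
              List.length_singleton]
            exact pow_le_one₀ hθ0.le hθ1
        | node C D =>
          -- notation
          obtain ⟨hPA, hPB, hdAB⟩ := isPhylo_node hP1
          obtain ⟨hPC, hPD, hdCD⟩ := isPhylo_node hP2
          set n : ℕ := cc (RTree.node A B) (RTree.node C D) with hn
          have hnR : (1:ℝ) ≤ (n:ℝ) := by exact_mod_cast hcc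
          have hn0 : (0:ℝ) ≤ (n:ℝ) := by linarith
          have hpq : cc A (RTree.node C D) + cc B (RTree.node C D) = n :=
            (cc_node_left hP1).symm
          have hrs : cc (RTree.node A B) C + cc (RTree.node A B) D = n :=
            (cc_node_right hP2).symm
          have hab : cc A C + cc A D = cc A (RTree.node C D) := (cc_node_right hP2).symm
          have hcd : cc B C + cc B D = cc B (RTree.node C D) := (cc_node_right hP2).symm
          have hac : cc A C + cc B C = cc (RTree.node A B) C := (cc_node_left hP1).symm
          have hbd : cc A D + cc B D = cc (RTree.node A B) D := (cc_node_left hP1).symm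
          have hsizeA : tsize A + tsize (RTree.node C D) ≤ N := by
            have := tsize_pos B; simp only [tsize] at hsize ⊢; omega
          have hsizeB : tsize B + tsize (RTree.node C D) ≤ N := by
            have := tsize_pos A; simp only [tsize] at hsize ⊢; omega
          have hsizeC : tsize (RTree.node A B) + tsize C ≤ N := by
            have := tsize_pos D; simp only [tsize] at hsize ⊢; omega
          have hsizeD : tsize (RTree.node A B) + tsize D ≤ N := by
            have := tsize_pos C; simp only [tsize] at hsize ⊢; omega
          have hlamn0 : (0:ℝ) ≤ lam * n := by positivity
          have hlamn1 : (0:ℝ) < lam * n := by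
            have : (0:ℝ) < (n:ℝ) := by linarith
            positivity
          -- the four descend cases
          by_cases hcA : lam * (n:ℝ) ≤ (cc A (RTree.node C D) : ℝ)
          · have hccA : 1 ≤ cc A (RTree.node C D) := by
              have : (0:ℝ) < (cc A (RTree.node C D) : ℝ) := lt_of_lt_of_le hlamn1 hcA
              exact_mod_cast Nat.one_le_iff_ne_zero.mpr (by exact_mod_cast this.ne')
            obtain ⟨S, hS, e₁, e₂, hle⟩ :=
              ih A (RTree.node C D) hsizeA hPA hP2 hccA
            refine ⟨S, hS, Embeds.left e₁, e₂, ?_⟩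
            refine le_trans ?_ hle
            apply arith_descend hl0 hl1 hb0 hn0 hlamn0 hcA
            have : A.height + 1 ≤ (RTree.node A B).height := by
              simp only [height]; omega
            omega
          · by_cases hcB : lam * (n:ℝ) ≤ (cc B (RTree.node C D) : ℝ)
            · have hccB : 1 ≤ cc B (RTree.node C D) := by
                have : (0:ℝ) < (cc B (RTree.node C D) : ℝ) := lt_of_lt_of_le hlamn1 hcB
                exact_mod_cast Nat.one_le_iff_ne_zero.mpr (by exact_mod_cast this.ne')
              obtain ⟨S, hS, e₁, e₂, hle⟩ :=
                ih B (RTree.node C D) hsizeB hPB hP2 hccB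
              refine ⟨S, hS, Embeds.right e₁, e₂, ?_⟩
              refine le_trans ?_ hle
              apply arith_descend hl0 hl1 hb0 hn0 hlamn0 hcB
              have : B.height + 1 ≤ (RTree.node A B).height := by
                simp only [height]; omega
              omega
            · by_cases hcC : lam * (n:ℝ) ≤ (cc (RTree.node A B) C : ℝ)
              · have hccC : 1 ≤ cc (RTree.node A B) C := by
                  have : (0:ℝ) < (cc (RTree.node A B) C : ℝ) := lt_of_lt_of_le hlamn1 hcC
                  exact_mod_cast Nat.one_le_iff_ne_zero.mpr (by exact_mod_cast this.ne')
                obtain ⟨S, hS, e₁, e₂, hle⟩ :=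
                  ih (RTree.node A B) C hsizeC hP1 hPC hccC
                refine ⟨S, hS, e₁, Embeds.left e₂, ?_⟩
                refine le_trans ?_ hle
                apply arith_descend hl0 hl1 hb0 hn0 hlamn0 hcC
                have : C.height + 1 ≤ (RTree.node C D).height := by
                  simp only [height]; omega
                omega
              · by_cases hcD : lam * (n:ℝ) ≤ (cc (RTree.node A B) D : ℝ)
                · have hccD : 1 ≤ cc (RTree.node A B) D := by
                    have : (0:ℝ) < (cc (RTree.node A B) D : ℝ) := lt_of_lt_of_le hlamn1 hcD
                    exact_mod_cast Nat.one_le_iff_ne_zero.mpr (by exact_mod_cast this.ne')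
                  obtain ⟨S, hS, e₁, e₂, hle⟩ :=
                    ih (RTree.node A B) D hsizeD hP1 hPD hccD
                  refine ⟨S, hS, e₁, Embeds.right e₂, ?_⟩
                  refine le_trans ?_ hle
                  apply arith_descend hl0 hl1 hb0 hn0 hlamn0 hcD
                  have : D.height + 1 ≤ (RTree.node C D).height := by
                    simp only [height]; omega
                  omega
                -- additive case
                · push_neg at hcA hcB hcC hcD
                  have hp : mu * (n:ℝ) < (cc A (RTree.node C D) : ℝ) := by
                    have h1 : ((cc A (RTree.node C D) : ℝ)) + (cc B (RTree.node C D) : ℝ)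
                        = (n:ℝ) := by exact_mod_cast congrArg (Nat.cast (R := ℝ)) hpq
                    rw [hmu]; linarith
                  have hq : mu * (n:ℝ) < (cc B (RTree.node C D) : ℝ) := by
                    have h1 : ((cc A (RTree.node C D) : ℝ)) + (cc B (RTree.node C D) : ℝ)
                        = (n:ℝ) := by exact_mod_cast congrArg (Nat.cast (R := ℝ)) hpq
                    rw [hmu]; linarith
                  have hr : mu * (n:ℝ) < (cc (RTree.node A B) C : ℝ) := by
                    have h1 : ((cc (RTree.node A B) C : ℝ)) + (cc (RTree.node A B) D : ℝ)
                        = (n:ℝ) := by exact_mod_cast congrArg (Nat.cast (R := ℝ)) hrs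
                    rw [hmu]; linarith
                  have hs : mu * (n:ℝ) < (cc (RTree.node A B) D : ℝ) := by
                    have h1 : ((cc (RTree.node A B) C : ℝ)) + (cc (RTree.node A B) D : ℝ)
                        = (n:ℝ) := by exact_mod_cast congrArg (Nat.cast (R := ℝ)) hrs
                    rw [hmu]; linarith
                  -- cast the sub-marginal identities
                  have habR : (cc A C : ℝ) + (cc A D : ℝ) = (cc A (RTree.node C D) : ℝ) := by
                    exact_mod_cast congrArg (Nat.cast (R := ℝ)) hab
                  have hcdR : (cc B C : ℝ) + (cc B D : ℝ) = (cc B (RTree.node C D) : ℝ) := by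
                    exact_mod_cast congrArg (Nat.cast (R := ℝ)) hcd
                  have hacR : (cc A C : ℝ) + (cc B C : ℝ) = (cc (RTree.node A B) C : ℝ) := by
                    exact_mod_cast congrArg (Nat.cast (R := ℝ)) hac
                  have hbdR : (cc A D : ℝ) + (cc B D : ℝ) = (cc (RTree.node A B) D : ℝ) := by
                    exact_mod_cast congrArg (Nat.cast (R := ℝ)) hbd
                  have hx0 : (0:ℝ) < mu * n / 2 := by
                    have : (0:ℝ) < (n:ℝ) := by linarith
                    positivity
                  have key : (mu * n / 2 ≤ (cc A C : ℝ) ∧ mu * n / 2 ≤ (cc B D : ℝ)) ∨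
                      (mu * n / 2 ≤ (cc A D : ℝ) ∧ mu * n / 2 ≤ (cc B C : ℝ)) := by
                    rcases le_or_gt (mu * n / 2) (cc A C : ℝ) with h1 | h1
                    · rcases le_or_gt (mu * n / 2) (cc B D : ℝ) with h2 | h2
                      · exact Or.inl ⟨h1, h2⟩
                      · -- d < x : b = s - d > x, c = q - d > x
                        refine Or.inr ⟨by linarith, by linarith⟩
                    · -- a < x : b = p - a > x, c = r - a > x
                      refine Or.inr ⟨by linarith, by linarith⟩
                  have mk : ∀ X Y : RTree L, mu * n / 2 ≤ (cc X Y : ℝ) → 1 ≤ cc X Y := by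
                    intro X Y hXY
                    have : (0:ℝ) < (cc X Y : ℝ) := lt_of_lt_of_le hx0 hXY
                    exact_mod_cast Nat.one_le_iff_ne_zero.mpr (by exact_mod_cast this.ne')
                  have hsizeAC : tsize A + tsize C ≤ N := by
                    have := tsize_pos B; have := tsize_pos D
                    simp only [tsize] at hsize ⊢; omega
                  have hsizeBD : tsize B + tsize D ≤ N := by
                    have := tsize_pos A; have := tsize_pos C
                    simp only [tsize] at hsize ⊢; omega
                  have hsizeAD : tsize A + tsize D ≤ N := by
                    have := tsize_pos B; have := tsize_pos C
                    simp only [tsize] at hsize ⊢; omega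
                  have hsizeBC : tsize B + tsize C ≤ N := by
                    have := tsize_pos A; have := tsize_pos D
                    simp only [tsize] at hsize ⊢; omega
                  have hhA : A.height + C.height ≤ (RTree.node A B).height + (RTree.node C D).height := by
                    simp only [height]; omega
                  have hhBD : B.height + D.height ≤ (RTree.node A B).height + (RTree.node C D).height := by
                    simp only [height]; omega
                  have hhAD : A.height + D.height ≤ (RTree.node A B).height + (RTree.node C D).height := by
                    simp only [height]; omega
                  have hhBC : B.height + C.height ≤ (RTree.node A B).height + (RTree.node C D).height := by
                    simp only [height]; omega
                  rcases key with ⟨h1, h2⟩ | ⟨h1, h2⟩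
                  · obtain ⟨S₁, hS₁, e₁A, e₁C, hle₁⟩ := ih A C hsizeAC hPA hPC (mk _ _ h1)
                    obtain ⟨S₂, hS₂, e₂B, e₂D, hle₂⟩ := ih B D hsizeBD hPB hPD (mk _ _ h2)
                    refine ⟨RTree.node S₁ S₂, phylo_node_of hP1 hS₁ hS₂ e₁A e₂B,
                      Embeds.pair e₁A e₂B, Embeds.pair e₁C e₂D, ?_⟩
                    rw [numLeaves_node, Nat.cast_add]
                    calc (n:ℝ) ^ beta * (lam ^ beta) ^ ((RTree.node A B).height + (RTree.node C D).height)
                        ≤ (cc A C : ℝ) ^ beta * (lam ^ beta) ^ (A.height + C.height) +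
                          (cc B D : ℝ) ^ beta * (lam ^ beta) ^ (B.height + D.height) :=
                          arith_pair hl0 hl1 hb0 hmu0.le hbm hn0 h1 h2 hhA hhBD
                      _ ≤ (S₁.numLeaves : ℝ) + (S₂.numLeaves : ℝ) := add_le_add hle₁ hle₂
                  · obtain ⟨S₁, hS₁, e₁A, e₁D, hle₁⟩ := ih A D hsizeAD hPA hPD (mk _ _ h1)
                    obtain ⟨S₂, hS₂, e₂B, e₂C, hle₂⟩ := ih B C hsizeBC hPB hPC (mk _ _ h2)
                    refine ⟨RTree.node S₁ S₂, phylo_node_of hP1 hS₁ hS₂ e₁A e₂B,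
                      Embeds.pair e₁A e₂B, Embeds.pair_swap e₁D e₂C, ?_⟩
                    rw [numLeaves_node, Nat.cast_add]
                    calc (n:ℝ) ^ beta * (lam ^ beta) ^ ((RTree.node A B).height + (RTree.node C D).height)
                        ≤ (cc A D : ℝ) ^ beta * (lam ^ beta) ^ (A.height + D.height) +
                          (cc B C : ℝ) ^ beta * (lam ^ beta) ^ (B.height + C.height) :=
                          arith_pair hl0 hl1 hb0 hmu0.le hbm hn0 h1 h2 hhAD hhBC
                      _ ≤ (S₁.numLeaves : ℝ) + (S₂.numLeaves : ℝ) := add_le_add hle₁ hle₂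


lemma le_umast {T₁ T₂ S : RTree L} (hP1 : T₁.IsPhylo) (hS : S.IsPhylo)
    (e₁ : Embeds S T₁) (e₂ : Embeds S T₂) : S.numLeaves ≤ umast T₁ T₂ := by
  apply le_csSup
  · refine ⟨T₁.numLeaves, fun m hm => ?_⟩
    obtain ⟨S₁, S₂, h₁, h₂, f₁, f₂, hu, rfl⟩ := hm
    exact numLeaves_le_of_embeds h₁ f₁
  · exact ⟨S, S, hS, hS, e₁, e₂, Relation.EqvGen.refl _, rfl⟩

lemma height_le_two_uradius (T : RTree L) : T.height ≤ 2 * uradius T := by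
  have h1 : T.height ≤ udiam T := by
    cases T with
    | leaf b => simp [height, udiam]
    | node l r =>
        simp only [height, udiam]
        have : max l.height r.height ≤ l.height + r.height :=
          max_le (Nat.le_add_right _ _) (Nat.le_add_left _ _)
        have h2 : l.height + r.height + 1 ≤
            max (max (rdiam l) (rdiam r)) (l.height + r.height + 1) := le_max_right _ _
        omega
  rw [uradius]
  omega

end RTree


end Aux

/-- For every real `k > 0` there is `β_k > 0` such that any two
unrooted binary phylogenetic trees `T₁`, `T₂` on the same leaf set of cardinality `n`,
each of radius at most `k·log n`, satisfy `mast{T₁,T₂} ≥ n^{β_k}` (log base 2). -/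
theorem stmt_15 (k : ℝ) (hk : 0 < k) :
    ∃ βk : ℝ, 0 < βk ∧
      ∀ (L : Type) (T₁ T₂ : RTree L) (n : ℕ),
        T₁.IsPhylo → T₂.IsPhylo → T₁.leafSet = T₂.leafSet → T₁.numLeaves = n →
        (RTree.uradius T₁ : ℝ) ≤ k * Real.logb 2 n →
        (RTree.uradius T₂ : ℝ) ≤ k * Real.logb 2 n →
        (n : ℝ) ^ βk ≤ (RTree.umast T₁ T₂ : ℝ) := by
  -- constants depending only on k
  set lam : ℝ := 2 ^ (-(1 / (8 * k))) with hlam_def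
  have hl0 : 0 < lam := Real.rpow_pos_of_pos two_pos _
  have hl1 : lam < 1 := by
    apply Real.rpow_lt_one_of_one_lt_of_neg one_lt_two
    have : 0 < 1 / (8 * k) := by positivity
    linarith
  set mu : ℝ := 1 - lam with hmu_def
  have hmu0 : 0 < mu := by simp only [hmu_def]; linarith
  have hmu1 : mu < 1 := by simp only [hmu_def]; linarith
  have h2mu : 1 < 2 / mu := by
    rw [lt_div_iff₀ hmu0]; linarith
  set beta : ℝ := Real.log 2 / Real.log (2 / mu) with hbeta_def
  have hlog2 : 0 < Real.log 2 := Real.log_pos one_lt_two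
  have hlogm : 0 < Real.log (2 / mu) := Real.log_pos h2mu
  have hb0 : 0 < beta := div_pos hlog2 hlogm
  have hbm : (mu / 2) ^ beta = (1 / 2 : ℝ) := by
    have hmu2 : (0:ℝ) < mu / 2 := by positivity
    rw [Real.rpow_def_of_pos hmu2]
    have hlogeq : Real.log (mu / 2) = -Real.log (2 / mu) := by
      rw [show mu / 2 = (2 / mu)⁻¹ by rw [inv_div], Real.log_inv]
    rw [hlogeq]
    have : -Real.log (2 / mu) * beta = -Real.log 2 := by
      rw [hbeta_def]; field_simp
    rw [this, Real.exp_neg, Real.exp_log two_pos]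
    norm_num
  refine ⟨beta / 2, by positivity, ?_⟩
  intro L T₁ T₂ n hP1 hP2 hLS hnum hr1 hr2
  letI : DecidableEq L := Classical.decEq L
  -- n ≥ 1
  have hn1 : 1 ≤ n := by
    rw [← hnum, RTree.numLeaves]
    exact List.length_pos_iff.mpr (RTree.leafList_ne_nil T₁)
  have hnR : (1:ℝ) ≤ (n:ℝ) := by exact_mod_cast hn1
  have hnpos : (0:ℝ) < (n:ℝ) := by linarith
  -- common count is n
  have hF : T₁.leafList.toFinset = T₂.leafList.toFinset := by
    apply Finset.ext
    intro x
    have hx := Set.ext_iff.mp hLS x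
    simpa [RTree.leafSet, List.mem_toFinset] using hx
  have hccn : RTree.cc T₁ T₂ = n := by
    rw [RTree.cc, ← hF, Finset.inter_self, List.toFinset_card_of_nodup hP1]
    exact hnum
  -- apply the main lemma
  obtain ⟨S, hS, e₁, e₂, hle⟩ :=
    RTree.exists_agreement hl0 hl1 hmu_def hb0 hbm
      (RTree.tsize T₁ + RTree.tsize T₂) T₁ T₂ le_rfl hP1 hP2 (by rw [hccn]; exact hn1)
  rw [hccn] at hle
  have humast : (S.numLeaves : ℝ) ≤ (RTree.umast T₁ T₂ : ℝ) := by
    exact_mod_cast RTree.le_umast hP1 hS e₁ e₂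
  -- heights are at most 2k log n
  have hh : ∀ T : RTree L, (RTree.uradius T : ℝ) ≤ k * Real.logb 2 n →
      (T.height : ℝ) ≤ 2 * k * Real.logb 2 n := by
    intro T hT
    have h1 : (T.height : ℝ) ≤ 2 * (RTree.uradius T : ℝ) := by
      have := RTree.height_le_two_uradius T
      exact_mod_cast this
    calc (T.height : ℝ) ≤ 2 * (RTree.uradius T : ℝ) := h1
      _ ≤ 2 * (k * Real.logb 2 n) := by linarith
      _ = 2 * k * Real.logb 2 n := by ring
  have hm : ((T₁.height + T₂.height : ℕ) : ℝ) ≤ 4 * k * Real.logb 2 n := by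
    push_cast
    have := hh T₁ hr1
    have := hh T₂ hr2
    linarith
  -- final exponent computation
  set m : ℕ := T₁.height + T₂.height with hm_def
  have hL0 : 0 ≤ Real.logb 2 n := Real.logb_nonneg one_lt_two hnR
  have hexp : (n:ℝ) ^ (beta / 2) ≤ (n:ℝ) ^ beta * (lam ^ beta) ^ m := by
    have hpow : (lam ^ beta) ^ m = (2:ℝ) ^ (-(1 / (8 * k)) * (beta * (m:ℝ))) := by
      rw [← Real.rpow_natCast (lam ^ beta) m, ← Real.rpow_mul hl0.le, hlam_def,
        ← Real.rpow_mul (by norm_num : (0:ℝ) ≤ 2)]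
    have hn2 : (n:ℝ) = 2 ^ Real.logb 2 n :=
      (Real.rpow_logb two_pos (by norm_num) hnpos).symm
    rw [hpow]
    nth_rewrite 1 [hn2]
    nth_rewrite 2 [hn2]
    rw [← Real.rpow_mul (by norm_num : (0:ℝ) ≤ 2), ← Real.rpow_mul (by norm_num : (0:ℝ) ≤ 2)]
    rw [← Real.rpow_add two_pos]
    apply Real.rpow_le_rpow_of_exponent_le one_le_two
    -- need: logb n * (beta/2) ≤ logb n * beta + (-(1/(8k)) * (beta * m))
    have hKb : (0:ℝ) < (1 / (8 * k)) * beta := by positivity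
    have step : (1 / (8 * k)) * beta * (m:ℝ) ≤
        (1 / (8 * k)) * beta * (4 * k * Real.logb 2 n) :=
      mul_le_mul_of_nonneg_left hm hKb.le
    have heq : (1 / (8 * k)) * beta * (4 * k * Real.logb 2 n)
        = beta * Real.logb 2 n / 2 := by
      field_simp
      ring
    rw [heq] at step
    nlinarith [step]
  calc (n:ℝ) ^ (beta / 2) ≤ (n:ℝ) ^ beta * (lam ^ beta) ^ m := hexp
    _ ≤ (S.numLeaves : ℝ) := hle
    _ ≤ (RTree.umast T₁ T₂ : ℝ) := humast
end

section
/- For every integer k > 0, let T1 be the rooted balanced binary phylogenetic tree of height 2k whose leaves, read from left to right, are labelled 1, 2, …, 4^k, and let T2 be the rooted balanced binary tree of height 2k whose leaves from left to right are labelled by the sequence swap(1, 2, …, 4^k). Then T1 and T2 have no rooted agreement subtree with more than 2^k leaves, i.e., mast{T1, T2} ≤ 2^k. -/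
/-- `buildL m S` is the rooted balanced binary tree of height `m` whose `2^m` leaves,
read from left to right, are labelled by the entries of the list `S`. -/
def buildL : ℕ → List ℕ → RTree ℕ
  | 0, S => RTree.leaf S.headI
  | m + 1, S => RTree.node (buildL m (S.take (2 ^ m))) (buildL m (S.drop (2 ^ m)))

/-- The `swap` operation on sequences of length `4^i`: `swap(S) = S` for a sequence of
length one, and if `S = S₁:S₂:S₃:S₄` is a concatenation of four blocks of length
`4^(i-1)`, then `swap(S) = swap(S₁):swap(S₃):swap(S₂):swap(S₄)`. -/
def swapList : ℕ → List ℕ → List ℕ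
  | 0, S => S
  | i + 1, S =>
      swapList i (S.take (4 ^ i)) ++
      swapList i (((S.drop (4 ^ i)).drop (4 ^ i)).take (4 ^ i)) ++
      swapList i ((S.drop (4 ^ i)).take (4 ^ i)) ++
      swapList i (((S.drop (4 ^ i)).drop (4 ^ i)).drop (4 ^ i))


namespace MastAux

open RTree

variable {L : Type}

lemma leafList_ne_nil (T : RTree L) : T.leafList ≠ [] := by
  induction T with
  | leaf b => simp [RTree.leafList]
  | node l r ihl ihr =>
    simp only [RTree.leafList, ne_eq, List.append_eq_nil_iff]
    intro h
    exact ihl h.1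

lemma exists_leaf (T : RTree L) : ∃ x, x ∈ T.leafList :=
  List.exists_mem_of_ne_nil _ (leafList_ne_nil T)

lemma mem_leafSet {x : L} {T : RTree L} : x ∈ T.leafSet ↔ x ∈ T.leafList := Iff.rfl

lemma leafSet_node (l r : RTree L) : (RTree.node l r).leafSet = l.leafSet ∪ r.leafSet := by
  ext x
  simp [RTree.leafSet, RTree.leafList]

lemma embeds_subset {S T : RTree L} (h : Embeds S T) : S.leafSet ⊆ T.leafSet := by
  induction h with
  | leaf b => exact subset_rfl
  | left h ih => rw [leafSet_node]; exact ih.trans Set.subset_union_left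
  | right h ih => rw [leafSet_node]; exact ih.trans Set.subset_union_right
  | pair h1 h2 ih1 ih2 =>
    rw [leafSet_node, leafSet_node]
    exact Set.union_subset_union ih1 ih2
  | pair_swap h1 h2 ih1 ih2 =>
    rw [leafSet_node, leafSet_node]
    exact Set.union_subset (ih1.trans Set.subset_union_right) (ih2.trans Set.subset_union_left)

lemma embeds_children {S T : RTree L} (h : Embeds S T) :
    ∀ {A B : RTree L}, S = RTree.node A B → Embeds A T ∧ Embeds B T := by
  induction h with
  | leaf b => intro A B hAB; cases hAB
  | left h ih =>
    intro A B hAB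
    obtain ⟨hA, hB⟩ := ih hAB
    exact ⟨Embeds.left hA, Embeds.left hB⟩
  | right h ih =>
    intro A B hAB
    obtain ⟨hA, hB⟩ := ih hAB
    exact ⟨Embeds.right hA, Embeds.right hB⟩
  | pair h1 h2 ih1 ih2 =>
    intro A B hAB
    injection hAB with e1 e2
    subst e1; subst e2
    exact ⟨Embeds.left h1, Embeds.right h2⟩
  | pair_swap h1 h2 ih1 ih2 =>
    intro A B hAB
    injection hAB with e1 e2
    subst e1; subst e2
    exact ⟨Embeds.right h1, Embeds.left h2⟩

lemma project_left {S l r : RTree L} (h : Embeds S (RTree.node l r))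
    (hd : Disjoint l.leafSet r.leafSet) (hs : S.leafSet ⊆ l.leafSet) : Embeds S l := by
  cases h with
  | left h => exact h
  | right h =>
    obtain ⟨x, hx⟩ := exists_leaf S
    exact absurd (embeds_subset h (mem_leafSet.mpr hx))
      (Set.disjoint_left.mp hd (hs (mem_leafSet.mpr hx)))
  | @pair s1 s2 ll rr h1 h2 =>
    exfalso
    obtain ⟨x, hx⟩ := exists_leaf s2
    have hxS : x ∈ (RTree.node s1 s2).leafSet := by
      rw [leafSet_node]; exact Set.mem_union_right _ (mem_leafSet.mpr hx)
    exact Set.disjoint_left.mp hd (hs hxS) (embeds_subset h2 (mem_leafSet.mpr hx))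
  | @pair_swap s1 s2 ll rr h1 h2 =>
    exfalso
    obtain ⟨x, hx⟩ := exists_leaf s1
    have hxS : x ∈ (RTree.node s1 s2).leafSet := by
      rw [leafSet_node]; exact Set.mem_union_left _ (mem_leafSet.mpr hx)
    exact Set.disjoint_left.mp hd (hs hxS) (embeds_subset h1 (mem_leafSet.mpr hx))

lemma project_right {S l r : RTree L} (h : Embeds S (RTree.node l r))
    (hd : Disjoint l.leafSet r.leafSet) (hs : S.leafSet ⊆ r.leafSet) : Embeds S r := by
  cases h with
  | right h => exact h
  | left h =>
    obtain ⟨x, hx⟩ := exists_leaf S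
    exact absurd (hs (mem_leafSet.mpr hx))
      (Set.disjoint_left.mp hd (embeds_subset h (mem_leafSet.mpr hx)))
  | @pair s1 s2 ll rr h1 h2 =>
    exfalso
    obtain ⟨x, hx⟩ := exists_leaf s1
    have hxS : x ∈ (RTree.node s1 s2).leafSet := by
      rw [leafSet_node]; exact Set.mem_union_left _ (mem_leafSet.mpr hx)
    exact Set.disjoint_left.mp hd (embeds_subset h1 (mem_leafSet.mpr hx)) (hs hxS)
  | @pair_swap s1 s2 ll rr h1 h2 =>
    exfalso
    obtain ⟨x, hx⟩ := exists_leaf s2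
    have hxS : x ∈ (RTree.node s1 s2).leafSet := by
      rw [leafSet_node]; exact Set.mem_union_right _ (mem_leafSet.mpr hx)
    exact Set.disjoint_left.mp hd (embeds_subset h2 (mem_leafSet.mpr hx)) (hs hxS)

lemma embeds_cases {S l r : RTree L} (h : Embeds S (RTree.node l r)) :
    S.leafSet ⊆ l.leafSet ∨ S.leafSet ⊆ r.leafSet ∨
      ∃ A B, S = RTree.node A B ∧
        ((A.leafSet ⊆ l.leafSet ∧ B.leafSet ⊆ r.leafSet) ∨
         (A.leafSet ⊆ r.leafSet ∧ B.leafSet ⊆ l.leafSet)) := by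
  cases h with
  | left h => exact Or.inl (embeds_subset h)
  | right h => exact Or.inr (Or.inl (embeds_subset h))
  | @pair s1 s2 ll rr h1 h2 =>
    exact Or.inr (Or.inr ⟨s1, s2, rfl, Or.inl ⟨embeds_subset h1, embeds_subset h2⟩⟩)
  | @pair_swap s1 s2 ll rr h1 h2 =>
    exact Or.inr (Or.inr ⟨s1, s2, rfl, Or.inr ⟨embeds_subset h1, embeds_subset h2⟩⟩)

lemma step_abstract {n : ℕ} {Q0 Q1 Q2 Q3 Q0' Q1' Q2' Q3' : RTree ℕ} {S0 S1 S2 S3 : Set ℕ}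
    (l0 : Q0.leafSet = S0) (l1 : Q1.leafSet = S1) (l2 : Q2.leafSet = S2) (l3 : Q3.leafSet = S3)
    (l0' : Q0'.leafSet = S0) (l1' : Q1'.leafSet = S1) (l2' : Q2'.leafSet = S2)
    (l3' : Q3'.leafSet = S3)
    (d01 : Disjoint S0 S1) (d02 : Disjoint S0 S2) (d03 : Disjoint S0 S3)
    (d12 : Disjoint S1 S2) (d13 : Disjoint S1 S3) (d23 : Disjoint S2 S3)
    (b0 : ∀ A : RTree ℕ, A.IsPhylo → Embeds A Q0 → Embeds A Q0' → A.numLeaves ≤ n)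
    (b1 : ∀ A : RTree ℕ, A.IsPhylo → Embeds A Q1 → Embeds A Q1' → A.numLeaves ≤ n)
    (b2 : ∀ A : RTree ℕ, A.IsPhylo → Embeds A Q2 → Embeds A Q2' → A.numLeaves ≤ n)
    (b3 : ∀ A : RTree ℕ, A.IsPhylo → Embeds A Q3 → Embeds A Q3' → A.numLeaves ≤ n)
    (S : RTree ℕ) (hph : S.IsPhylo)
    (h1 : Embeds S (RTree.node (RTree.node Q0 Q1) (RTree.node Q2 Q3)))
    (h2 : Embeds S (RTree.node (RTree.node Q0' Q2') (RTree.node Q1' Q3'))) :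
    S.numLeaves ≤ 2 * n := by
  have L01 : (RTree.node Q0 Q1).leafSet = S0 ∪ S1 := by rw [leafSet_node, l0, l1]
  have L23 : (RTree.node Q2 Q3).leafSet = S2 ∪ S3 := by rw [leafSet_node, l2, l3]
  have L02 : (RTree.node Q0' Q2').leafSet = S0 ∪ S2 := by rw [leafSet_node, l0', l2']
  have L13 : (RTree.node Q1' Q3').leafSet = S1 ∪ S3 := by rw [leafSet_node, l1', l3']
  have dT1 : Disjoint (RTree.node Q0 Q1).leafSet (RTree.node Q2 Q3).leafSet := by
    rw [L01, L23, Set.disjoint_union_left]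
    exact ⟨Set.disjoint_union_right.mpr ⟨d02, d03⟩, Set.disjoint_union_right.mpr ⟨d12, d13⟩⟩
  have dT2 : Disjoint (RTree.node Q0' Q2').leafSet (RTree.node Q1' Q3').leafSet := by
    rw [L02, L13, Set.disjoint_union_left]
    exact ⟨Set.disjoint_union_right.mpr ⟨d01, d03⟩, Set.disjoint_union_right.mpr ⟨d12.symm, d23⟩⟩
  have dq01 : Disjoint Q0.leafSet Q1.leafSet := by rw [l0, l1]; exact d01
  have dq23 : Disjoint Q2.leafSet Q3.leafSet := by rw [l2, l3]; exact d23
  have dq02 : Disjoint Q0'.leafSet Q2'.leafSet := by rw [l0', l2']; exact d02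
  have dq13 : Disjoint Q1'.leafSet Q3'.leafSet := by rw [l1', l3']; exact d13
  have qbound : ∀ A : RTree ℕ, A.IsPhylo →
      Embeds A (RTree.node (RTree.node Q0 Q1) (RTree.node Q2 Q3)) →
      Embeds A (RTree.node (RTree.node Q0' Q2') (RTree.node Q1' Q3')) →
      (A.leafSet ⊆ S0 ∨ A.leafSet ⊆ S1 ∨ A.leafSet ⊆ S2 ∨ A.leafSet ⊆ S3) →
      A.numLeaves ≤ n := by
    intro A hA e1 e2 hsub
    rcases hsub with hsub | hsub | hsub | hsub
    · have eL := project_left e1 dT1 (by rw [L01]; exact hsub.trans Set.subset_union_left)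
      have eQ := project_left eL dq01 (by rw [l0]; exact hsub)
      have eL' := project_left e2 dT2 (by rw [L02]; exact hsub.trans Set.subset_union_left)
      have eQ' := project_left eL' dq02 (by rw [l0']; exact hsub)
      exact b0 A hA eQ eQ'
    · have eL := project_left e1 dT1 (by rw [L01]; exact hsub.trans Set.subset_union_right)
      have eQ := project_right eL dq01 (by rw [l1]; exact hsub)
      have eR' := project_right e2 dT2 (by rw [L13]; exact hsub.trans Set.subset_union_left)
      have eQ' := project_left eR' dq13 (by rw [l1']; exact hsub)
      exact b1 A hA eQ eQ'
    · have eR := project_right e1 dT1 (by rw [L23]; exact hsub.trans Set.subset_union_left)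
      have eQ := project_left eR dq23 (by rw [l2]; exact hsub)
      have eL' := project_left e2 dT2 (by rw [L02]; exact hsub.trans Set.subset_union_right)
      have eQ' := project_right eL' dq02 (by rw [l2']; exact hsub)
      exact b2 A hA eQ eQ'
    · have eR := project_right e1 dT1 (by rw [L23]; exact hsub.trans Set.subset_union_right)
      have eQ := project_right eR dq23 (by rw [l3]; exact hsub)
      have eR' := project_right e2 dT2 (by rw [L13]; exact hsub.trans Set.subset_union_right)
      have eQ' := project_right eR' dq13 (by rw [l3']; exact hsub)
      exact b3 A hA eQ eQ'
  have pick : ∀ s : Set ℕ, (s ⊆ S0 ∪ S1 ∨ s ⊆ S2 ∪ S3) → (s ⊆ S0 ∪ S2 ∨ s ⊆ S1 ∪ S3) →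
      (s ⊆ S0 ∨ s ⊆ S1 ∨ s ⊆ S2 ∨ s ⊆ S3) := by
    intro s hu hv
    rcases hu with hu | hu <;> rcases hv with hv | hv
    · left; intro x hx
      rcases hu hx with h | h
      · exact h
      · rcases hv hx with h' | h'
        · exact h'
        · exact absurd h' (Set.disjoint_left.mp d12 h)
    · right; left; intro x hx
      rcases hu hx with h | h
      · rcases hv hx with h' | h'
        · exact h'
        · exact absurd h' (Set.disjoint_left.mp d03 h)
      · exact h
    · right; right; left; intro x hx
      rcases hu hx with h | h
      · exact h
      · rcases hv hx with h' | h'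
        · exact absurd h (Set.disjoint_left.mp d03 h')
        · exact h'
    · right; right; right; intro x hx
      rcases hu hx with h | h
      · rcases hv hx with h' | h'
        · exact absurd h (Set.disjoint_left.mp d12 h')
        · exact h'
      · exact h
  have norm1 : (S.leafSet ⊆ S0 ∪ S1 ∨ S.leafSet ⊆ S2 ∪ S3) ∨
      ∃ A B, S = RTree.node A B ∧ (A.leafSet ⊆ S0 ∪ S1 ∨ A.leafSet ⊆ S2 ∪ S3) ∧
        (B.leafSet ⊆ S0 ∪ S1 ∨ B.leafSet ⊆ S2 ∪ S3) := by
    rcases embeds_cases h1 with h | h | ⟨A, B, hS, ⟨x, y⟩ | ⟨x, y⟩⟩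
    · rw [L01] at h; exact Or.inl (Or.inl h)
    · rw [L23] at h; exact Or.inl (Or.inr h)
    · rw [L01] at x; rw [L23] at y; exact Or.inr ⟨A, B, hS, Or.inl x, Or.inr y⟩
    · rw [L23] at x; rw [L01] at y; exact Or.inr ⟨A, B, hS, Or.inr x, Or.inl y⟩
  have norm2 : (S.leafSet ⊆ S0 ∪ S2 ∨ S.leafSet ⊆ S1 ∪ S3) ∨
      ∃ A B, S = RTree.node A B ∧ (A.leafSet ⊆ S0 ∪ S2 ∨ A.leafSet ⊆ S1 ∪ S3) ∧
        (B.leafSet ⊆ S0 ∪ S2 ∨ B.leafSet ⊆ S1 ∪ S3) := by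
    rcases embeds_cases h2 with h | h | ⟨A, B, hS, ⟨x, y⟩ | ⟨x, y⟩⟩
    · rw [L02] at h; exact Or.inl (Or.inl h)
    · rw [L13] at h; exact Or.inl (Or.inr h)
    · rw [L02] at x; rw [L13] at y; exact Or.inr ⟨A, B, hS, Or.inl x, Or.inr y⟩
    · rw [L13] at x; rw [L02] at y; exact Or.inr ⟨A, B, hS, Or.inr x, Or.inl y⟩
  have nodeBound : ∀ A B : RTree ℕ, S = RTree.node A B →
      (A.leafSet ⊆ S0 ∪ S1 ∨ A.leafSet ⊆ S2 ∪ S3) →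
      (A.leafSet ⊆ S0 ∪ S2 ∨ A.leafSet ⊆ S1 ∪ S3) →
      (B.leafSet ⊆ S0 ∪ S1 ∨ B.leafSet ⊆ S2 ∪ S3) →
      (B.leafSet ⊆ S0 ∪ S2 ∨ B.leafSet ⊆ S1 ∪ S3) →
      S.numLeaves ≤ 2 * n := by
    intro A B hS a1 a2 b1' b2'
    obtain ⟨eA1, eB1⟩ := embeds_children h1 hS
    obtain ⟨eA2, eB2⟩ := embeds_children h2 hS
    have hphAB : (A.leafList ++ B.leafList).Nodup := by
      have := hph; rw [hS] at this; exact this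
    have hphA : A.IsPhylo := List.Nodup.of_append_left hphAB
    have hphB : B.IsPhylo := List.Nodup.of_append_right hphAB
    have bA := qbound A hphA eA1 eA2 (pick _ a1 a2)
    have bB := qbound B hphB eB1 eB2 (pick _ b1' b2')
    have hnum : S.numLeaves = A.numLeaves + B.numLeaves := by
      rw [hS]; simp [RTree.numLeaves, RTree.leafList]
    omega
  rcases norm1 with hw1 | ⟨A, B, hS, ha1, hb1⟩
  · rcases norm2 with hw2 | ⟨A, B, hS, ha2, hb2⟩
    · have := qbound S hph h1 h2 (pick _ hw1 hw2)
      omega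
    · have sA : A.leafSet ⊆ S.leafSet := by rw [hS, leafSet_node]; exact Set.subset_union_left
      have sB : B.leafSet ⊆ S.leafSet := by rw [hS, leafSet_node]; exact Set.subset_union_right
      exact nodeBound A B hS (hw1.imp sA.trans sA.trans) ha2 (hw1.imp sB.trans sB.trans) hb2
  · rcases norm2 with hw2 | ⟨A', B', hS', ha2, hb2⟩
    · have sA : A.leafSet ⊆ S.leafSet := by rw [hS, leafSet_node]; exact Set.subset_union_left
      have sB : B.leafSet ⊆ S.leafSet := by rw [hS, leafSet_node]; exact Set.subset_union_right
      exact nodeBound A B hS ha1 (hw2.imp sA.trans sA.trans) hb1 (hw2.imp sB.trans sB.trans)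
    · rw [hS] at hS'
      injection hS' with e1 e2
      subst e1; subst e2
      exact nodeBound A B hS ha1 ha2 hb1 hb2

lemma buildL_append (n : ℕ) (A B : List ℕ) (hA : A.length = 2 ^ n) :
    buildL (n + 1) (A ++ B) = RTree.node (buildL n A) (buildL n B) := by
  have e1 : (A ++ B).take (2 ^ n) = A := by rw [← hA]; exact List.take_left
  have e2 : (A ++ B).drop (2 ^ n) = B := by rw [← hA]; exact List.drop_left
  rw [buildL, e1, e2]

lemma leafList_buildL : ∀ (m : ℕ) (S : List ℕ), S.length = 2 ^ m → (buildL m S).leafList = S := by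
  intro m
  induction m with
  | zero =>
    intro S hS
    obtain ⟨x, rfl⟩ := List.length_eq_one_iff.mp (by simpa using hS)
    rfl
  | succ n ih =>
    intro S hS
    have hp : (2 : ℕ) ^ (n + 1) = 2 ^ n + 2 ^ n := by rw [pow_succ]; ring
    have h1 : (S.take (2 ^ n)).length = 2 ^ n := by rw [List.length_take, hS]; omega
    have h2 : (S.drop (2 ^ n)).length = 2 ^ n := by rw [List.length_drop, hS]; omega
    rw [buildL]
    show (buildL n (S.take (2 ^ n))).leafList ++ (buildL n (S.drop (2 ^ n))).leafList = S
    rw [ih _ h1, ih _ h2, List.take_append_drop]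

lemma swapList_quarters (i : ℕ) (A B C D : List ℕ)
    (hA : A.length = 4 ^ i) (hB : B.length = 4 ^ i) (hC : C.length = 4 ^ i) :
    swapList (i + 1) (A ++ (B ++ (C ++ D))) =
      swapList i A ++ swapList i C ++ swapList i B ++ swapList i D := by
  have e1 : (A ++ (B ++ (C ++ D))).take (4 ^ i) = A := by rw [← hA]; exact List.take_left
  have e2 : (A ++ (B ++ (C ++ D))).drop (4 ^ i) = B ++ (C ++ D) := by
    rw [← hA]; exact List.drop_left
  have e3 : (B ++ (C ++ D)).take (4 ^ i) = B := by rw [← hB]; exact List.take_left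
  have e4 : (B ++ (C ++ D)).drop (4 ^ i) = C ++ D := by rw [← hB]; exact List.drop_left
  have e5 : (C ++ D).take (4 ^ i) = C := by rw [← hC]; exact List.take_left
  have e6 : (C ++ D).drop (4 ^ i) = D := by rw [← hC]; exact List.drop_left
  rw [swapList, e1, e2, e4, e3, e5, e6]

lemma perm_quarters {α : Type} {a b c d a' b' c' d' : List α}
    (pa : a'.Perm a) (pb : b'.Perm b) (pc : c'.Perm c) (pd : d'.Perm d) :
    (a' ++ c' ++ b' ++ d').Perm (a ++ (b ++ (c ++ d))) := by
  have h1 : (a' ++ c' ++ b' ++ d').Perm (a ++ c ++ b ++ d) :=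
    ((pa.append pc).append pb).append pd
  refine h1.trans ?_
  have e1 : a ++ c ++ b ++ d = a ++ (c ++ b ++ d) := by simp [List.append_assoc]
  have e2 : a ++ (b ++ (c ++ d)) = a ++ (b ++ c ++ d) := by simp [List.append_assoc]
  rw [e1, e2]
  exact List.Perm.append_left a (List.perm_append_comm.append_right d)

lemma swapList_perm : ∀ (i : ℕ) (S : List ℕ), S.length = 4 ^ i → (swapList i S).Perm S := by
  intro i
  induction i with
  | zero => intro S _; rw [swapList]
  | succ n ih =>
    intro S hS
    have h4 : (4 : ℕ) ^ (n + 1) = 4 ^ n + (4 ^ n + (4 ^ n + 4 ^ n)) := by rw [pow_succ]; ring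
    have hA : (S.take (4 ^ n)).length = 4 ^ n := by rw [List.length_take, hS]; omega
    have hB : ((S.drop (4 ^ n)).take (4 ^ n)).length = 4 ^ n := by
      rw [List.length_take, List.length_drop, hS]; omega
    have hC : (((S.drop (4 ^ n)).drop (4 ^ n)).take (4 ^ n)).length = 4 ^ n := by
      rw [List.length_take, List.length_drop, List.length_drop, hS]; omega
    have hD : (((S.drop (4 ^ n)).drop (4 ^ n)).drop (4 ^ n)).length = 4 ^ n := by
      rw [List.length_drop, List.length_drop, List.length_drop, hS]; omega
    have hdec : S.take (4 ^ n) ++ ((S.drop (4 ^ n)).take (4 ^ n) ++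
        ((((S.drop (4 ^ n)).drop (4 ^ n)).take (4 ^ n)) ++
          (((S.drop (4 ^ n)).drop (4 ^ n)).drop (4 ^ n)))) = S := by
      rw [List.take_append_drop, List.take_append_drop, List.take_append_drop]
    have pA := ih _ hA
    have pB := ih _ hB
    have pC := ih _ hC
    have pD := ih _ hD
    rw [swapList]
    conv_rhs => rw [← hdec]
    exact perm_quarters pA pB pC pD

lemma range'_split (s p q : ℕ) :
    List.range' s (p + q) = List.range' s p ++ List.range' (s + p) q := by
  have h := List.range'_append (s := s) (m := p) (n := q) (step := 1)
  rw [one_mul] at h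
  exact h.symm

lemma main (k : ℕ) : ∀ (a : ℕ) (S : RTree ℕ), S.IsPhylo →
    Embeds S (buildL (2 * k) (List.range' a (4 ^ k))) →
    Embeds S (buildL (2 * k) (swapList k (List.range' a (4 ^ k)))) →
    S.numLeaves ≤ 2 ^ k := by
  induction k with
  | zero =>
    intro a S _ h1 _
    have hb : buildL (2 * 0) (List.range' a (4 ^ 0)) = RTree.leaf a := rfl
    rw [hb] at h1
    cases h1
    simp [RTree.numLeaves, RTree.leafList]
  | succ k ih =>
    intro a S hph h1 h2
    have hm2 : (4 : ℕ) ^ k = 2 ^ (2 * k) := by rw [pow_mul]; norm_num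
    have hpow : (4 : ℕ) ^ (k + 1) = 4 ^ k + (4 ^ k + (4 ^ k + 4 ^ k)) := by rw [pow_succ]; ring
    have h2k1 : (2 : ℕ) ^ (2 * k + 1) = 4 ^ k + 4 ^ k := by rw [pow_succ, ← hm2]; ring
    have h22 : 2 * (k + 1) = (2 * k + 1) + 1 := by ring
    set R0 := List.range' a (4 ^ k) with hR0
    set R1 := List.range' (a + 4 ^ k) (4 ^ k) with hR1
    set R2 := List.range' (a + 4 ^ k + 4 ^ k) (4 ^ k) with hR2
    set R3 := List.range' (a + 4 ^ k + 4 ^ k + 4 ^ k) (4 ^ k) with hR3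
    have lenR0 : R0.length = 4 ^ k := by rw [hR0]; simp
    have lenR1 : R1.length = 4 ^ k := by rw [hR1]; simp
    have lenR2 : R2.length = 4 ^ k := by rw [hR2]; simp
    have lenR3 : R3.length = 4 ^ k := by rw [hR3]; simp
    have lenW : ∀ R : List ℕ, R.length = 4 ^ k → (swapList k R).length = 4 ^ k := fun R h =>
      ((swapList_perm k R h).length_eq).trans h
    have hrange : List.range' a (4 ^ (k + 1)) = R0 ++ (R1 ++ (R2 ++ R3)) := by
      rw [hR0, hR1, hR2, hR3, hpow, range'_split, range'_split, range'_split]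
    have hT1 : buildL (2 * (k + 1)) (List.range' a (4 ^ (k + 1))) =
        RTree.node (RTree.node (buildL (2 * k) R0) (buildL (2 * k) R1))
          (RTree.node (buildL (2 * k) R2) (buildL (2 * k) R3)) := by
      rw [hrange, h22]
      rw [show R0 ++ (R1 ++ (R2 ++ R3)) = (R0 ++ R1) ++ (R2 ++ R3) by
        simp [List.append_assoc]]
      rw [buildL_append (2 * k + 1) (R0 ++ R1) (R2 ++ R3)
        (by rw [List.length_append, lenR0, lenR1]; omega)]
      rw [buildL_append (2 * k) R0 R1 (lenR0.trans hm2),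
        buildL_append (2 * k) R2 R3 (lenR2.trans hm2)]
    have hswap : swapList (k + 1) (R0 ++ (R1 ++ (R2 ++ R3))) =
        swapList k R0 ++ swapList k R2 ++ swapList k R1 ++ swapList k R3 :=
      swapList_quarters k R0 R1 R2 R3 lenR0 lenR1 lenR2
    have hT2 : buildL (2 * (k + 1)) (swapList (k + 1) (List.range' a (4 ^ (k + 1)))) =
        RTree.node
          (RTree.node (buildL (2 * k) (swapList k R0)) (buildL (2 * k) (swapList k R2)))
          (RTree.node (buildL (2 * k) (swapList k R1)) (buildL (2 * k) (swapList k R3))) := by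
      rw [hrange, hswap, h22]
      rw [show swapList k R0 ++ swapList k R2 ++ swapList k R1 ++ swapList k R3 =
          (swapList k R0 ++ swapList k R2) ++ (swapList k R1 ++ swapList k R3) by
        simp [List.append_assoc]]
      rw [buildL_append (2 * k + 1) (swapList k R0 ++ swapList k R2)
        (swapList k R1 ++ swapList k R3)
        (by rw [List.length_append, lenW R0 lenR0, lenW R2 lenR2]; omega)]
      rw [buildL_append (2 * k) _ _ ((lenW R0 lenR0).trans hm2),
        buildL_append (2 * k) _ _ ((lenW R1 lenR1).trans hm2)]
    have lb : ∀ R : List ℕ, R.length = 4 ^ k → (buildL (2 * k) R).leafSet = {x | x ∈ R} := by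
      intro R h
      ext x
      show x ∈ (buildL (2 * k) R).leafList ↔ x ∈ R
      rw [leafList_buildL _ _ (h.trans hm2)]
    have lbR : ∀ (s : ℕ) (R : List ℕ), R = List.range' s (4 ^ k) →
        (buildL (2 * k) R).leafSet = {x | s ≤ x ∧ x < s + 4 ^ k} := by
      intro s R hR
      have hlen : R.length = 4 ^ k := by rw [hR]; simp
      rw [lb R hlen]
      ext x
      simp only [Set.mem_setOf_eq]
      rw [hR]
      exact List.mem_range'_1
    have lbW : ∀ (s : ℕ) (R : List ℕ), R = List.range' s (4 ^ k) →
        (buildL (2 * k) (swapList k R)).leafSet = {x | s ≤ x ∧ x < s + 4 ^ k} := by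
      intro s R hR
      have hlen : R.length = 4 ^ k := by rw [hR]; simp
      rw [lb _ (lenW R hlen)]
      ext x
      simp only [Set.mem_setOf_eq]
      rw [(swapList_perm k R hlen).mem_iff, hR]
      exact List.mem_range'_1
    have dS : ∀ p q : ℕ, p + 4 ^ k ≤ q →
        Disjoint {x : ℕ | p ≤ x ∧ x < p + 4 ^ k} {x : ℕ | q ≤ x ∧ x < q + 4 ^ k} := by
      intro p q hpq
      rw [Set.disjoint_left]
      intro x hx hx'
      simp only [Set.mem_setOf_eq] at hx hx'
      omega
    rw [hT1] at h1
    rw [hT2] at h2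
    have hfin := step_abstract (lbR a R0 hR0) (lbR (a + 4 ^ k) R1 hR1)
      (lbR (a + 4 ^ k + 4 ^ k) R2 hR2) (lbR (a + 4 ^ k + 4 ^ k + 4 ^ k) R3 hR3)
      (lbW a R0 hR0) (lbW (a + 4 ^ k) R1 hR1)
      (lbW (a + 4 ^ k + 4 ^ k) R2 hR2) (lbW (a + 4 ^ k + 4 ^ k + 4 ^ k) R3 hR3)
      (dS _ _ (by omega)) (dS _ _ (by omega)) (dS _ _ (by omega))
      (dS _ _ (by omega)) (dS _ _ (by omega)) (dS _ _ (by omega))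
      (fun A hA e1 e2 => by rw [hR0] at e1 e2; exact ih a A hA e1 e2)
      (fun A hA e1 e2 => by rw [hR1] at e1 e2; exact ih (a + 4 ^ k) A hA e1 e2)
      (fun A hA e1 e2 => by rw [hR2] at e1 e2; exact ih (a + 4 ^ k + 4 ^ k) A hA e1 e2)
      (fun A hA e1 e2 => by rw [hR3] at e1 e2; exact ih (a + 4 ^ k + 4 ^ k + 4 ^ k) A hA e1 e2)
      S hph h1 h2
    have : (2 : ℕ) ^ (k + 1) = 2 * 2 ^ k := by rw [pow_succ]; ring
    omega

end MastAux

/-- For `k > 0`, let `T₁` be the rooted balanced binary tree of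
height `2k` with leaves `1, 2, …, 4^k` from left to right, and `T₂` the rooted balanced
binary tree of height `2k` with leaves `swap(1, 2, …, 4^k)` from left to right.  Then
`T₁` and `T₂` have no rooted agreement subtree with more than `2^k` leaves,
i.e. `mast{T₁,T₂} ≤ 2^k`. -/
theorem stmt_16 (k : ℕ) (hk : 0 < k) :
    RTree.mast (buildL (2 * k) (List.range' 1 (4 ^ k)))
        (buildL (2 * k) (swapList k (List.range' 1 (4 ^ k)))) ≤ 2 ^ k := by
  rw [RTree.mast]
  refine csSup_le' ?_
  rintro n ⟨S, hph, h1, h2, rfl⟩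
  exact MastAux.main k 1 S hph h1 h2
end
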